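/- If a first-round price p1 in (0,1] admits a sophisticated-focused implementation at sophistication level μ, then p1 does not admit any naive-focused implementation at μ. -/

import Mathlib

open MeasureTheory Set Filter

noncomputable section

namespace RepeatedSales

/-- `F` is the CDF of an atomless distribution fully supported on `[0,1]`:
continuous, strictly increasing on `[0,1]`, with `F 0 = 0` and `F 1 = 1`. -/
structure NiceCDF (F : ℝ → ℝ) : Prop where
  cont : Continuous F
  mono : StrictMonoOn F (Icc (0:ℝ) 1)
  zero : F 0 = 0
  one : F 1 = 1

/-- The (price-posting) revenue curve `R(p) = p (1 - F p)`. -/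
def Rcurve (F : ℝ → ℝ) (p : ℝ) : ℝ := p * (1 - F p)

/-- The CDF truncated at `x` from above: `F_{≤x}(v) = min (F v / F x) 1`. -/
def Fle (F : ℝ → ℝ) (x v : ℝ) : ℝ := min (F v / F x) 1

/-- The CDF truncated at `x` from below: `F_{≥x}(v) = max ((F v - F x)/(1 - F x)) 0`. -/
def Fge (F : ℝ → ℝ) (x v : ℝ) : ℝ := max ((F v - F x) / (1 - F x)) 0

/-- Revenue curve of the truncated distribution `F_{≤x}`. -/
def Rle (F : ℝ → ℝ) (x p : ℝ) : ℝ := p * (1 - Fle F x p)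

/-- Revenue curve of the truncated distribution `F_{≥x}`. -/
def Rge (F : ℝ → ℝ) (x p : ℝ) : ℝ := p * (1 - Fge F x p)

/-- Posterior probability of sophistication after a reject. -/
def muR (F : ℝ → ℝ) (μ p1 t : ℝ) : ℝ := μ * F t / (μ * F t + (1 - μ) * F p1)

/-- Posterior probability of sophistication after an accept. -/
def muA (F : ℝ → ℝ) (μ p1 t : ℝ) : ℝ :=
  μ * (1 - F t) / (μ * (1 - F t) + (1 - μ) * (1 - F p1))

/-- The seller's posterior CDF over values after a first-round reject. -/
def FrejCDF (F : ℝ → ℝ) (μ p1 t v : ℝ) : ℝ :=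
  muR F μ p1 t * Fle F t v + (1 - muR F μ p1 t) * Fle F p1 v

/-- The seller's posterior CDF over values after a first-round accept. -/
def FaccCDF (F : ℝ → ℝ) (μ p1 t v : ℝ) : ℝ :=
  muA F μ p1 t * Fge F t v + (1 - muA F μ p1 t) * Fge F p1 v

/-- The second-round revenue curve conditioned on a reject. -/
def Rrej (F : ℝ → ℝ) (μ p1 t p : ℝ) : ℝ := p * (1 - FrejCDF F μ p1 t p)

/-- The second-round revenue curve conditioned on an accept. -/
def Racc (F : ℝ → ℝ) (μ p1 t p : ℝ) : ℝ := p * (1 - FaccCDF F μ p1 t p)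

/-- The (topological) support of a measure on `ℝ`: points all of whose
neighborhoods have positive measure. -/
def msupp (ν : Measure ℝ) : Set ℝ := {x | ∀ U ∈ nhds x, ν U ≠ 0}

/-- A continuation `(p1, p2R, p2A, t)` at sophistication level `μ`:
`p2R`, `p2A` are (random) prices, i.e. probability measures supported in `[0,1]`,
every point of the support of `p2R` (resp. `p2A`) maximizes the reject (resp. accept)
revenue curve over `[0,1]`, and the threshold indifference equation holds.
The denominators defining the posteriors are assumed positive. -/
structure Continuation (F : ℝ → ℝ) (μ p1 : ℝ) (p2R p2A : Measure ℝ) (t : ℝ) : Prop where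
  denR_pos : 0 < μ * F t + (1 - μ) * F p1
  denA_pos : 0 < μ * (1 - F t) + (1 - μ) * (1 - F p1)
  probR : IsProbabilityMeasure p2R
  probA : IsProbabilityMeasure p2A
  suppR01 : msupp p2R ⊆ Icc 0 1
  suppA01 : msupp p2A ⊆ Icc 0 1
  optR : ∀ p ∈ msupp p2R, IsMaxOn (Rrej F μ p1 t) (Icc 0 1) p
  optA : ∀ p ∈ msupp p2A, IsMaxOn (Racc F μ p1 t) (Icc 0 1) p
  indiff : t - p1 + (∫ x, max (t - x) 0 ∂p2A) = ∫ x, max (t - x) 0 ∂p2R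

/-- A continuation with deterministic accept price `p2A ≥ t`. -/
def SophFocused (p2A : Measure ℝ) (t : ℝ) : Prop :=
  ∃ a : ℝ, p2A = Measure.dirac a ∧ t ≤ a

/-- A continuation with deterministic accept price `p2A < t`. -/
def NaiveFocused (p2A : Measure ℝ) (t : ℝ) : Prop :=
  ∃ a : ℝ, p2A = Measure.dirac a ∧ a < t

/-- The seller's expected revenue of a continuation at sophistication `μ`. -/
def sellerRev (F : ℝ → ℝ) (μ p1 t : ℝ) (p2R p2A : Measure ℝ) : ℝ :=
  μ * (p1 * (1 - F t) + (∫ a, (if a ≤ t then a * (1 - F a) else 0) ∂p2A)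
      + ∫ r, r * (F t - F r) ∂p2R)
  + (1 - μ) * (p1 * (1 - F p1) + (∫ a, a * (1 - F a) ∂p2A)
      + ∫ r, (if r ≤ p1 then r * (F p1 - F r) else 0) ∂p2R)

lemma msupp_dirac (a : ℝ) : msupp (Measure.dirac a) = {a} := by
  ext x
  simp only [msupp, mem_setOf_eq, mem_singleton_iff]
  constructor
  · intro h
    by_contra hne
    refine h {a}ᶜ (isOpen_compl_singleton.mem_nhds (by simpa using hne)) ?_
    rw [Measure.dirac_apply' _ (MeasurableSet.singleton a).compl]
    simp
  · rintro rfl U hU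
    rw [Measure.dirac_apply_of_mem (mem_of_mem_nhds hU)]
    exact one_ne_zero

lemma isClosed_msupp (ν : Measure ℝ) : IsClosed (msupp ν) := by
  rw [← isOpen_compl_iff, isOpen_iff_mem_nhds]
  intro x hx
  simp only [mem_compl_iff, msupp, mem_setOf_eq, not_forall] at hx
  obtain ⟨U, hU, hU0⟩ := hx
  push_neg at hU0
  obtain ⟨V, hVU, hVo, hxV⟩ := mem_nhds_iff.1 hU
  have hV0 : ν V = 0 := measure_mono_null hVU hU0
  filter_upwards [hVo.mem_nhds hxV] with y hy
  simp only [mem_compl_iff, msupp, mem_setOf_eq, not_forall]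
  exact ⟨V, hVo.mem_nhds hy, by simp [hV0]⟩

lemma measure_compl_msupp (ν : Measure ℝ) : ν (msupp ν)ᶜ = 0 := by
  have h : ∀ x : ((msupp ν)ᶜ : Set ℝ), ∃ U : Set ℝ, IsOpen U ∧ (x : ℝ) ∈ U ∧ ν U = 0 := by
    rintro ⟨x, hx⟩
    simp only [mem_compl_iff, msupp, mem_setOf_eq, not_forall] at hx
    obtain ⟨U, hU, hU0⟩ := hx
    push_neg at hU0
    obtain ⟨V, hVU, hVo, hxV⟩ := mem_nhds_iff.1 hU
    exact ⟨V, hVo, hxV, measure_mono_null hVU hU0⟩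
  choose U hUo hxU hU0 using h
  obtain ⟨T, hTc, hTU⟩ := TopologicalSpace.isOpen_iUnion_countable U hUo
  have hcover : (msupp ν)ᶜ ⊆ ⋃ i ∈ T, U i := by
    rw [hTU]
    intro x hx
    exact mem_iUnion.2 ⟨⟨x, hx⟩, hxU _⟩
  refine measure_mono_null hcover ?_
  exact (measure_biUnion_null_iff hTc).2 fun i _ => hU0 i

lemma ae_mem_msupp (ν : Measure ℝ) : ∀ᵐ x ∂ν, x ∈ msupp ν := by
  rw [ae_iff]
  exact measure_compl_msupp ν

lemma msupp_nonempty (ν : Measure ℝ) [IsProbabilityMeasure ν] : (msupp ν).Nonempty := by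
  by_contra h
  rw [not_nonempty_iff_eq_empty] at h
  have h1 := measure_compl_msupp ν
  rw [h, compl_empty] at h1
  simp [measure_univ] at h1

lemma integrable_id_of_msupp {ν : Measure ℝ} [IsProbabilityMeasure ν]
    (h01 : msupp ν ⊆ Icc 0 1) : Integrable (fun x : ℝ => x) ν := by
  refine (integrable_const (1 : ℝ)).mono' measurable_id.aestronglyMeasurable ?_
  filter_upwards [ae_mem_msupp ν] with x hx
  have h := h01 hx
  rw [Real.norm_eq_abs, abs_le]
  exact ⟨by linarith [h.1], h.2⟩

lemma integral_max_eq {ν : Measure ℝ} [IsProbabilityMeasure ν]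
    (h01 : msupp ν ⊆ Icc 0 1) {t : ℝ} (hle : ∀ y ∈ msupp ν, y ≤ t) :
    ∫ x, max (t - x) 0 ∂ν = t - ∫ x, x ∂ν := by
  have h1 : ∫ x, max (t - x) 0 ∂ν = ∫ x, (t - x) ∂ν := by
    refine integral_congr_ae ?_
    filter_upwards [ae_mem_msupp ν] with x hx
    exact max_eq_left (by linarith [hle x hx])
  rw [h1, integral_sub (integrable_const t) (integrable_id_of_msupp h01)]
  simp

lemma integral_le_sSup {ν : Measure ℝ} [IsProbabilityMeasure ν]
    (h01 : msupp ν ⊆ Icc 0 1) : ∫ x, x ∂ν ≤ sSup (msupp ν) := by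
  have h : ∫ x, x ∂ν ≤ ∫ _, sSup (msupp ν) ∂ν := by
    refine integral_mono_ae (integrable_id_of_msupp h01) (integrable_const _) ?_
    filter_upwards [ae_mem_msupp ν] with x hx
    exact le_csSup ⟨1, fun y hy => (h01 hy).2⟩ hx
  simpa using h

lemma sInf_le_integral {ν : Measure ℝ} [IsProbabilityMeasure ν]
    (h01 : msupp ν ⊆ Icc 0 1) : sInf (msupp ν) ≤ ∫ x, x ∂ν := by
  have h : ∫ _, sInf (msupp ν) ∂ν ≤ ∫ x, x ∂ν := by
    refine integral_mono_ae (integrable_const _) (integrable_id_of_msupp h01) ?_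
    filter_upwards [ae_mem_msupp ν] with x hx
    exact csInf_le ⟨0, fun y hy => (h01 hy).1⟩ hx
  simpa using h

lemma aux_ge {c y : ℝ} (hc : c ≤ 1) (hy : y ≤ 1) :
    (1 - c) * (1 - max ((y - c) / (1 - c)) 0) = 1 - max y c := by
  rcases eq_or_lt_of_le hc with h | h
  · subst h
    simp [max_eq_right hy]
  · have hpos : (0 : ℝ) < 1 - c := by linarith
    rcases le_total y c with h2 | h2
    · rw [max_eq_right h2,
        max_eq_right (div_nonpos_iff.mpr (Or.inr ⟨sub_nonpos.2 h2, hpos.le⟩))]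
      ring
    · rw [max_eq_left h2, max_eq_left (div_nonneg (by linarith) hpos.le)]
      field_simp
      ring

lemma aux_le {c y : ℝ} (hc : 0 ≤ c) (hy : 0 ≤ y) :
    c * (1 - min (y / c) 1) = max (c - y) 0 := by
  rcases eq_or_lt_of_le hc with h | h
  · rw [← h]
    rw [zero_mul, max_eq_right (by linarith : (0:ℝ) - y ≤ 0)]
  · have e : c * min (y / c) 1 = min y c := by
      rw [mul_min_of_nonneg _ _ h.le, mul_one, mul_div_cancel₀ _ (ne_of_gt h)]
    rcases le_total y c with h2 | h2
    · rw [mul_sub, mul_one, e, min_eq_left h2, max_eq_left (by linarith)]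
    · rw [mul_sub, mul_one, e, min_eq_right h2, max_eq_right (by linarith)]
      ring


/-- Scaled accept revenue curve. -/
def Va (F : ℝ → ℝ) (μ p1 t p : ℝ) : ℝ :=
  μ * (p * (1 - max (F p) (F t))) + (1 - μ) * (p * (1 - max (F p) (F p1)))

/-- Scaled reject revenue curve. -/
def Wr (F : ℝ → ℝ) (μ p1 t p : ℝ) : ℝ :=
  μ * (p * max (F t - F p) 0) + (1 - μ) * (p * max (F p1 - F p) 0)

lemma Racc_scale (F : ℝ → ℝ) {μ p1 t p : ℝ}
    (hden : 0 < μ * (1 - F t) + (1 - μ) * (1 - F p1))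
    (hFt : F t ≤ 1) (hFp1 : F p1 ≤ 1) (hFp : F p ≤ 1) :
    (μ * (1 - F t) + (1 - μ) * (1 - F p1)) * Racc F μ p1 t p = Va F μ p1 t p := by
  have e1 : (1 - F t) * (1 - Fge F t p) = 1 - max (F p) (F t) := by
    simp only [Fge]; exact aux_ge hFt hFp
  have e2 : (1 - F p1) * (1 - Fge F p1 p) = 1 - max (F p) (F p1) := by
    simp only [Fge]; exact aux_ge hFp1 hFp
  have hD : μ * (1 - F t) + (1 - μ) * (1 - F p1) ≠ 0 := ne_of_gt hden
  simp only [Va, Racc, FaccCDF, muA, ← e1, ← e2]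
  field_simp
  ring

lemma Rrej_scale (F : ℝ → ℝ) {μ p1 t p : ℝ}
    (hden : 0 < μ * F t + (1 - μ) * F p1)
    (hFt : 0 ≤ F t) (hFp1 : 0 ≤ F p1) (hFp : 0 ≤ F p) :
    (μ * F t + (1 - μ) * F p1) * Rrej F μ p1 t p = Wr F μ p1 t p := by
  have e1 : F t * (1 - Fle F t p) = max (F t - F p) 0 := by
    simp only [Fle]; exact aux_le hFt hFp
  have e2 : F p1 * (1 - Fle F p1 p) = max (F p1 - F p) 0 := by
    simp only [Fle]; exact aux_le hFp1 hFp
  have hD : μ * F t + (1 - μ) * F p1 ≠ 0 := ne_of_gt hden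
  simp only [Wr, Rrej, FrejCDF, muR, ← e1, ← e2]
  field_simp
  ring

lemma Va_low {F : ℝ → ℝ} {μ p1 t p : ℝ} (h1 : F p ≤ F t) (h2 : F p ≤ F p1) :
    Va F μ p1 t p = p * (μ * (1 - F t) + (1 - μ) * (1 - F p1)) := by
  simp only [Va, max_eq_right h1, max_eq_right h2]; ring

lemma Va_mid {F : ℝ → ℝ} {μ p1 t p : ℝ} (h1 : F p ≤ F t) (h2 : F p1 ≤ F p) :
    Va F μ p1 t p = μ * (p * (1 - F t)) + (1 - μ) * (p * (1 - F p)) := by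
  simp only [Va, max_eq_right h1, max_eq_left h2]

lemma Va_hi {F : ℝ → ℝ} {μ p1 t p : ℝ} (h1 : F t ≤ F p) (h2 : F p1 ≤ F p) :
    Va F μ p1 t p = p * (1 - F p) := by
  simp only [Va, max_eq_left h1, max_eq_left h2]; ring

lemma Wr_low {F : ℝ → ℝ} {μ p1 t p : ℝ} (h1 : F p ≤ F t) (h2 : F p ≤ F p1) :
    Wr F μ p1 t p = μ * (p * (F t - F p)) + (1 - μ) * (p * (F p1 - F p)) := by
  simp only [Wr, max_eq_left (sub_nonneg.2 h1), max_eq_left (sub_nonneg.2 h2)]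

lemma Wr_mid {F : ℝ → ℝ} {μ p1 t p : ℝ} (h1 : F p ≤ F t) (h2 : F p1 ≤ F p) :
    Wr F μ p1 t p = μ * (p * (F t - F p)) := by
  simp only [Wr, max_eq_left (sub_nonneg.2 h1), max_eq_right (sub_nonpos.2 h2)]; ring

lemma Wr_zero {F : ℝ → ℝ} {μ p1 t p : ℝ} (h1 : F t ≤ F p) (h2 : F p1 ≤ F p) :
    Wr F μ p1 t p = 0 := by
  simp only [Wr, max_eq_right (sub_nonpos.2 h1), max_eq_right (sub_nonpos.2 h2)]; ring


set_option maxHeartbeats 2000000 in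
/-- **Lemma: no dual implementation.** If a first-round price
`p1 ∈ (0,1]` admits a sophisticated-focused implementation at sophistication
level `μ`, then `p1` does not admit any naive-focused implementation at `μ`. -/
theorem soph_focused_excludes_naive_focused
    (F : ℝ → ℝ) (hF : NiceCDF F)
    (hcon : StrictConcaveOn ℝ (Icc (0:ℝ) 1) (Rcurve F))
    (μ p1 : ℝ) (hμ : μ ∈ Icc (0:ℝ) 1) (hp1 : p1 ∈ Ioc (0:ℝ) 1)
    (hsoph : ∃ (t : ℝ) (p2R p2A : Measure ℝ), t ∈ Icc (0:ℝ) 1 ∧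
      Continuation F μ p1 p2R p2A t ∧ SophFocused p2A t) :
    ¬ ∃ (t : ℝ) (p2R p2A : Measure ℝ), t ∈ Icc (0:ℝ) 1 ∧
      Continuation F μ p1 p2R p2A t ∧ NaiveFocused p2A t := by
  obtain ⟨ts, PR, PA, hts, cS, aS, hPAeq, haSts⟩ := hsoph
  rintro ⟨tn, QR, QA, htn, cN, aN, hQAeq, haNtn⟩
  haveI instPR : IsProbabilityMeasure PR := cS.probR
  haveI instQR : IsProbabilityMeasure QR := cN.probR
  -- basic facts about F
  have h0I : (0:ℝ) ∈ Icc (0:ℝ) 1 := ⟨le_refl 0, zero_le_one⟩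
  have h1I : (1:ℝ) ∈ Icc (0:ℝ) 1 := ⟨zero_le_one, le_refl 1⟩
  have Fmono : MonotoneOn F (Icc (0:ℝ) 1) := hF.mono.monotoneOn
  have hFnn : ∀ {x : ℝ}, x ∈ Icc (0:ℝ) 1 → 0 ≤ F x := by
    intro x hx
    have := Fmono h0I hx hx.1
    rwa [hF.zero] at this
  have hFle1 : ∀ {x : ℝ}, x ∈ Icc (0:ℝ) 1 → F x ≤ 1 := by
    intro x hx
    have := Fmono hx h1I hx.2
    rwa [hF.one] at this
  have hp1I : p1 ∈ Icc (0:ℝ) 1 := ⟨hp1.1.le, hp1.2⟩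
  -- a_S and a_N are in [0,1] and are maximizers
  have haSsupp : aS ∈ msupp PA := by rw [hPAeq, msupp_dirac]; exact rfl
  have haS01 : aS ∈ Icc (0:ℝ) 1 := cS.suppA01 haSsupp
  have haNsupp : aN ∈ msupp QA := by rw [hQAeq, msupp_dirac]; exact rfl
  have haN01 : aN ∈ Icc (0:ℝ) 1 := cN.suppA01 haNsupp
  have hmaxS : IsMaxOn (Racc F μ p1 ts) (Icc 0 1) aS := cS.optA aS haSsupp
  have hmaxN : IsMaxOn (Racc F μ p1 tn) (Icc 0 1) aN := cN.optA aN haNsupp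
  -- indifference conditions, simplified
  have hSA0 : ∫ x, max (ts - x) 0 ∂PA = 0 := by
    rw [hPAeq, integral_dirac]
    exact max_eq_right (by linarith)
  have hSind : ts - p1 = ∫ x, max (ts - x) 0 ∂PR := by
    have h := cS.indiff
    rw [hSA0] at h
    linarith
  have htsp1 : p1 ≤ ts := by
    have h0 : 0 ≤ ∫ x, max (ts - x) 0 ∂PR :=
      integral_nonneg fun x => le_max_right _ _
    linarith
  have hNA : ∫ x, max (tn - x) 0 ∂QA = tn - aN := by
    rw [hQAeq, integral_dirac]
    exact max_eq_left (by linarith)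
  have hNind : (tn - p1) + (tn - aN) = ∫ x, max (tn - x) 0 ∂QR := by
    have h := cN.indiff
    rw [hNA] at h
    linarith
  -- transfer of the maximality to the scaled curves
  have hVN : ∀ p ∈ Icc (0:ℝ) 1, Va F μ p1 tn p ≤ Va F μ p1 tn aN := by
    intro p hp
    have h1 : Racc F μ p1 tn p ≤ Racc F μ p1 tn aN := hmaxN hp
    calc Va F μ p1 tn p
        = (μ * (1 - F tn) + (1 - μ) * (1 - F p1)) * Racc F μ p1 tn p :=
          (Racc_scale F cN.denA_pos (hFle1 htn) (hFle1 hp1I) (hFle1 hp)).symm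
      _ ≤ (μ * (1 - F tn) + (1 - μ) * (1 - F p1)) * Racc F μ p1 tn aN :=
          mul_le_mul_of_nonneg_left h1 cN.denA_pos.le
      _ = Va F μ p1 tn aN :=
          Racc_scale F cN.denA_pos (hFle1 htn) (hFle1 hp1I) (hFle1 haN01)
  have hVS : ∀ p ∈ Icc (0:ℝ) 1, Va F μ p1 ts p ≤ Va F μ p1 ts aS := by
    intro p hp
    have h1 : Racc F μ p1 ts p ≤ Racc F μ p1 ts aS := hmaxS hp
    calc Va F μ p1 ts p
        = (μ * (1 - F ts) + (1 - μ) * (1 - F p1)) * Racc F μ p1 ts p :=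
          (Racc_scale F cS.denA_pos (hFle1 hts) (hFle1 hp1I) (hFle1 hp)).symm
      _ ≤ (μ * (1 - F ts) + (1 - μ) * (1 - F p1)) * Racc F μ p1 ts aS :=
          mul_le_mul_of_nonneg_left h1 cS.denA_pos.le
      _ = Va F μ p1 ts aS :=
          Racc_scale F cS.denA_pos (hFle1 hts) (hFle1 hp1I) (hFle1 haS01)
  -- Step: p1 ≤ aN
  have hFaN_tn : F aN ≤ F tn := Fmono haN01 htn haNtn.le
  have hp1aN : p1 ≤ aN := by
    by_contra hcon'
    push_neg at hcon'
    have hmI : min tn p1 ∈ Icc (0:ℝ) 1 :=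
      ⟨le_min htn.1 hp1.1.le, (min_le_right _ _).trans hp1.2⟩
    have hFaN_p1 : F aN ≤ F p1 := Fmono haN01 hp1I hcon'.le
    have e1 : Va F μ p1 tn aN
        = aN * (μ * (1 - F tn) + (1 - μ) * (1 - F p1)) := Va_low hFaN_tn hFaN_p1
    have e2 : Va F μ p1 tn (min tn p1)
        = (min tn p1) * (μ * (1 - F tn) + (1 - μ) * (1 - F p1)) :=
      Va_low (Fmono hmI htn (min_le_left _ _)) (Fmono hmI hp1I (min_le_right _ _))
    have haNm : aN < min tn p1 := lt_min haNtn hcon'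
    have h3 := hVN (min tn p1) hmI
    rw [e1, e2] at h3
    nlinarith [cN.denA_pos]
  have hp1tn : p1 < tn := lt_of_le_of_lt hp1aN haNtn
  have hFp1aN : F p1 ≤ F aN := Fmono hp1I haN01 hp1aN
  have hFp1tn : F p1 ≤ F tn := Fmono hp1I htn hp1tn.le
  -- dispose of μ = 1
  rcases eq_or_lt_of_le hμ.2 with hμ1 | hμ1
  · have hFtn1 : F tn < 1 := by
      have h := cN.denA_pos
      nlinarith [h]
    have e1 : Va F μ p1 tn aN
        = μ * (aN * (1 - F tn)) + (1 - μ) * (aN * (1 - F aN)) := Va_mid hFaN_tn hFp1aN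
    have e2 : Va F μ p1 tn tn
        = μ * (tn * (1 - F tn)) + (1 - μ) * (tn * (1 - F tn)) := Va_mid (le_refl _) hFp1tn
    have h3 := hVN tn htn
    rw [e1, e2] at h3
    rw [hμ1] at h3
    nlinarith [haNtn, hFtn1]
  -- main case split
  rcases le_or_gt tn ts with hcase | hcase
  · -- tn ≤ ts : accept-side contradiction
    have hFtn_ts : F tn ≤ F ts := Fmono htn hts hcase
    have hFts_aS : F ts ≤ F aS := Fmono hts haS01 haSts
    have hFaN_ts : F aN ≤ F ts := hFaN_tn.trans hFtn_ts
    have hFp1_aS : F p1 ≤ F aS := hFp1tn.trans (hFtn_ts.trans hFts_aS)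
    have eA1 : Va F μ p1 tn aN
        = μ * (aN * (1 - F tn)) + (1 - μ) * (aN * (1 - F aN)) := Va_mid hFaN_tn hFp1aN
    have eA2 : Va F μ p1 tn tn
        = μ * (tn * (1 - F tn)) + (1 - μ) * (tn * (1 - F tn)) := Va_mid (le_refl _) hFp1tn
    have hA := hVN tn htn
    rw [eA1, eA2] at hA
    have eS1 : Va F μ p1 ts aS = aS * (1 - F aS) := Va_hi hFts_aS hFp1_aS
    have eS2 : Va F μ p1 ts aN
        = μ * (aN * (1 - F ts)) + (1 - μ) * (aN * (1 - F aN)) := Va_mid hFaN_ts hFp1aN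
    have hB := hVS aN haN01
    rw [eS1, eS2] at hB
    have hRaS : aS * (1 - F aS) ≤ aS * (1 - F ts) :=
      mul_le_mul_of_nonneg_left (by linarith) haS01.1
    rcases lt_or_ge tn aS with hlt | hle
    · -- chord case aN < tn < aS
      have hchord := hcon.slope_anti_adjacent haN01 haS01 haNtn hlt
      have hd1 : (0:ℝ) < tn - aN := by linarith
      have hd2 : (0:ℝ) < aS - tn := by linarith
      rw [div_lt_div_iff₀ hd2 hd1] at hchord
      simp only [Rcurve] at hchord
      -- key chord inequality
      have hkey : (tn * (1 - F tn) - aN * (1 - F aN)) * (aS - aN)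
          > (aS * (1 - F aS) - aN * (1 - F aN)) * (tn - aN) := by nlinarith [hchord]
      -- hu : (1-μ) * u ≤ -(μ * (1 - F tn) * (tn - aN))
      have hu : (1 - μ) * (tn * (1 - F tn) - aN * (1 - F aN))
          ≤ -(μ * (1 - F tn) * (tn - aN)) := by nlinarith [hA]
      -- hv : (1-μ) * v ≥ -(μ * (1 - F tn) * (aS - aN))
      have hv : -(μ * (1 - F tn) * (aS - aN))
          ≤ (1 - μ) * (aS * (1 - F aS) - aN * (1 - F aN)) := by
        have h5 : μ * (1 - F ts) * (aS - aN) ≤ μ * (1 - F tn) * (aS - aN) := by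
          have : μ * (1 - F ts) ≤ μ * (1 - F tn) :=
            mul_le_mul_of_nonneg_left (by linarith) hμ.1
          exact mul_le_mul_of_nonneg_right this (by linarith)
        nlinarith [hB, h5, mul_le_mul_of_nonneg_left hRaS hμ.1]
      have h6 : (1 - μ) * (tn * (1 - F tn) - aN * (1 - F aN)) * (aS - aN)
          ≤ -(μ * (1 - F tn) * (tn - aN)) * (aS - aN) :=
        mul_le_mul_of_nonneg_right hu (by linarith)
      have h7 : -(μ * (1 - F tn) * (aS - aN)) * (tn - aN)
          ≤ (1 - μ) * (aS * (1 - F aS) - aN * (1 - F aN)) * (tn - aN) :=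
        mul_le_mul_of_nonneg_right hv (by linarith)
      have h8 : (1 - μ) * ((aS * (1 - F aS) - aN * (1 - F aN)) * (tn - aN))
          < (1 - μ) * ((tn * (1 - F tn) - aN * (1 - F aN)) * (aS - aN)) :=
        mul_lt_mul_of_pos_left hkey (by linarith)
      nlinarith [h6, h7, h8]
    · -- aS ≤ tn forces ts = tn = aS; midpoint contradiction
      have heq1 : ts = tn := le_antisymm (haSts.trans hle) hcase
      have heq2 : aS = tn := le_antisymm hle (heq1 ▸ haSts)
      rw [heq1, heq2] at hB
      rw [heq2] at hRaS
      rw [heq1] at hFts_aS hFtn_ts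
      -- equality : Va tn aN = Va tn tn  (expanded form)
      have heqV : μ * (aN * (1 - F tn)) + (1 - μ) * (aN * (1 - F aN))
          = μ * (tn * (1 - F tn)) + (1 - μ) * (tn * (1 - F tn)) := by
        nlinarith [hA, hB, hRaS]
      set w := (aN + tn) / 2 with hw
      have hawn : aN < w := by rw [hw]; linarith
      have hwtn : w < tn := by rw [hw]; linarith
      have hwI : w ∈ Icc (0:ℝ) 1 := ⟨by linarith [haN01.1], by linarith [htn.2]⟩
      have hFw_tn : F w ≤ F tn := Fmono hwI htn hwtn.le
      have hFp1_w : F p1 ≤ F w := Fmono hp1I hwI (hp1aN.trans hawn.le)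
      have eW : Va F μ p1 tn w
          = μ * (w * (1 - F tn)) + (1 - μ) * (w * (1 - F w)) := Va_mid hFw_tn hFp1_w
      have hsc := hcon.2 haN01 htn (ne_of_lt haNtn)
        (by norm_num : (0:ℝ) < 1/2) (by norm_num : (0:ℝ) < 1/2) (by norm_num)
      simp only [smul_eq_mul] at hsc
      have hwpt : (1/2 : ℝ) * aN + (1/2 : ℝ) * tn = w := by rw [hw]; ring
      rw [hwpt] at hsc
      simp only [Rcurve] at hsc
      have h9 := hVN w hwI
      rw [eW, eA1] at h9
      have e3 : w * (1 - F tn) = (aN * (1 - F tn) + tn * (1 - F tn)) / 2 := by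
        rw [hw]; ring
      have hsc' := mul_lt_mul_of_pos_left hsc (show (0:ℝ) < 1 - μ by linarith)
      nlinarith [hsc', heqV, h9, e3]
  · -- ts < tn : reject-side contradiction
    have hp0I : p1/2 ∈ Icc (0:ℝ) 1 := ⟨by linarith [hp1.1], by linarith [hp1.2]⟩
    have hFp0 : F (p1/2) < F p1 := hF.mono hp0I hp1I (by linarith [hp1.1])
    have hFp1ts : F p1 ≤ F ts := Fmono hp1I hts htsp1
    have hFp0nn : 0 ≤ F (p1/2) := hFnn hp0I
    have hFtstn : F ts < F tn := hF.mono hts htn hcase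
    -- transfer of reject maximality
    have hWS : ∀ y ∈ msupp PR, ∀ p ∈ Icc (0:ℝ) 1, Wr F μ p1 ts p ≤ Wr F μ p1 ts y := by
      intro y hy p hp
      have hyI : y ∈ Icc (0:ℝ) 1 := cS.suppR01 hy
      have h1 : Rrej F μ p1 ts p ≤ Rrej F μ p1 ts y := cS.optR y hy hp
      calc Wr F μ p1 ts p
          = (μ * F ts + (1 - μ) * F p1) * Rrej F μ p1 ts p :=
            (Rrej_scale F cS.denR_pos (hFnn hts) (hFnn hp1I) (hFnn hp)).symm
        _ ≤ (μ * F ts + (1 - μ) * F p1) * Rrej F μ p1 ts y :=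
            mul_le_mul_of_nonneg_left h1 cS.denR_pos.le
        _ = Wr F μ p1 ts y :=
            Rrej_scale F cS.denR_pos (hFnn hts) (hFnn hp1I) (hFnn hyI)
    have hWN : ∀ y ∈ msupp QR, ∀ p ∈ Icc (0:ℝ) 1, Wr F μ p1 tn p ≤ Wr F μ p1 tn y := by
      intro y hy p hp
      have hyI : y ∈ Icc (0:ℝ) 1 := cN.suppR01 hy
      have h1 : Rrej F μ p1 tn p ≤ Rrej F μ p1 tn y := cN.optR y hy hp
      calc Wr F μ p1 tn p
          = (μ * F tn + (1 - μ) * F p1) * Rrej F μ p1 tn p :=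
            (Rrej_scale F cN.denR_pos (hFnn htn) (hFnn hp1I) (hFnn hp)).symm
        _ ≤ (μ * F tn + (1 - μ) * F p1) * Rrej F μ p1 tn y :=
            mul_le_mul_of_nonneg_left h1 cN.denR_pos.le
        _ = Wr F μ p1 tn y :=
            Rrej_scale F cN.denR_pos (hFnn htn) (hFnn hp1I) (hFnn hyI)
    rcases eq_or_lt_of_le hμ.1 with hμ0 | hμ0
    · -- μ = 0 : soph continuation impossible
      have hsupplt : ∀ y ∈ msupp PR, y < p1 := by
        intro y hy
        have hyI : y ∈ Icc (0:ℝ) 1 := cS.suppR01 hy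
        have h1 := hWS y hy (p1/2) hp0I
        by_contra hge
        push_neg at hge
        have hFy : F p1 ≤ F y := Fmono hp1I hyI hge
        have e1 : Wr F μ p1 ts (p1/2)
            = μ * ((p1/2) * (F ts - F (p1/2))) + (1 - μ) * ((p1/2) * (F p1 - F (p1/2))) :=
          Wr_low (by linarith) hFp0.le
        have e2 : Wr F μ p1 ts y = 0 := by
          rcases le_total (F y) (F ts) with h5 | h5
          · rw [Wr_mid h5 hFy, ← hμ0]; ring
          · exact Wr_zero h5 hFy
        rw [e1, e2, ← hμ0] at h1
        nlinarith [hp1.1, hFp0]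
      have hle' : ∀ y ∈ msupp PR, y ≤ ts := fun y hy => (hsupplt y hy).le.trans htsp1
      have hmean : ∫ x, x ∂PR = p1 := by
        have h1 := integral_max_eq cS.suppR01 hle'
        rw [h1] at hSind
        linarith
      have hne := msupp_nonempty PR
      have hbdd : BddAbove (msupp PR) := ⟨1, fun y hy => (cS.suppR01 hy).2⟩
      have hmem := (isClosed_msupp PR).csSup_mem hne hbdd
      have h1 : sSup (msupp PR) < p1 := hsupplt _ hmem
      have h2 := integral_le_sSup cS.suppR01
      rw [hmean] at h2
      linarith
    · -- 0 < μ
      -- all support points of PR are < ts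
      have hWp0S : 0 < Wr F μ p1 ts (p1/2) := by
        rw [Wr_low (by linarith) hFp0.le]
        have h1 : 0 < μ * ((p1/2) * (F ts - F (p1/2))) := by
          apply mul_pos hμ0
          apply mul_pos (by linarith [hp1.1])
          linarith
        have h2 : 0 ≤ (1 - μ) * ((p1/2) * (F p1 - F (p1/2))) := by
          apply mul_nonneg (by linarith)
          apply mul_nonneg (by linarith [hp1.1])
          linarith
        linarith
      have hsuppltS : ∀ y ∈ msupp PR, y < ts := by
        intro y hy
        have hyI : y ∈ Icc (0:ℝ) 1 := cS.suppR01 hy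
        have h1 := hWS y hy (p1/2) hp0I
        by_contra hge
        push_neg at hge
        have hFy1 : F ts ≤ F y := Fmono hts hyI hge
        have hFy2 : F p1 ≤ F y := hFp1ts.trans hFy1
        rw [Wr_zero hFy1 hFy2] at h1
        linarith
      have hmeanS : ∫ x, x ∂PR = p1 := by
        have h1 := integral_max_eq cS.suppR01 (fun y hy => (hsuppltS y hy).le)
        rw [h1] at hSind
        linarith
      have hneS := msupp_nonempty PR
      have hbddS : BddAbove (msupp PR) := ⟨1, fun y hy => (cS.suppR01 hy).2⟩
      have hmemS := (isClosed_msupp PR).csSup_mem hneS hbddS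
      set hS := sSup (msupp PR) with hhS
      have hhSI : hS ∈ Icc (0:ℝ) 1 := cS.suppR01 hmemS
      have hhSp1 : p1 ≤ hS := by
        have h2 := integral_le_sSup cS.suppR01
        rw [hmeanS] at h2
        exact h2
      have hhSts : hS < ts := hsuppltS _ hmemS
      -- all support points of QR are < tn
      have hFp0tn : F (p1/2) < F tn := lt_of_lt_of_le hFp0 hFp1tn
      have hsuppltN : ∀ y ∈ msupp QR, y < tn := by
        intro y hy
        have hyI : y ∈ Icc (0:ℝ) 1 := cN.suppR01 hy
        have h1 := hWN y hy (p1/2) hp0I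
        by_contra hge
        push_neg at hge
        have hFy1 : F tn ≤ F y := Fmono htn hyI hge
        have hFy2 : F p1 ≤ F y := hFp1tn.trans hFy1
        rw [Wr_zero hFy1 hFy2] at h1
        have hWp0N : 0 < Wr F μ p1 tn (p1/2) := by
          rw [Wr_low (by linarith) hFp0.le]
          have h3 : 0 < μ * ((p1/2) * (F tn - F (p1/2))) := by
            apply mul_pos hμ0
            apply mul_pos (by linarith [hp1.1])
            linarith
          have h4 : 0 ≤ (1 - μ) * ((p1/2) * (F p1 - F (p1/2))) := by
            apply mul_nonneg (by linarith)
            apply mul_nonneg (by linarith [hp1.1])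
            linarith
          linarith
        linarith
      have hmeanN : ∫ x, x ∂QR = p1 + aN - tn := by
        have h1 := integral_max_eq cN.suppR01 (fun y hy => (hsuppltN y hy).le)
        rw [h1] at hNind
        linarith
      have hneN := msupp_nonempty QR
      have hbddN : BddBelow (msupp QR) := ⟨0, fun y hy => (cN.suppR01 hy).1⟩
      have hmemN := (isClosed_msupp QR).csInf_mem hneN hbddN
      set lN := sInf (msupp QR) with hlN
      have hlNI : lN ∈ Icc (0:ℝ) 1 := cN.suppR01 hmemN
      have hlNp1 : lN < p1 := by
        have h2 := sInf_le_integral cN.suppR01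
        rw [hmeanN] at h2
        linarith
      -- the four evaluations
      have hFlN_p1 : F lN ≤ F p1 := Fmono hlNI hp1I hlNp1.le
      have hFlN_ts : F lN ≤ F ts := hFlN_p1.trans hFp1ts
      have hFlN_tn : F lN ≤ F tn := hFlN_p1.trans hFp1tn
      have hFhS_ts : F hS ≤ F ts := Fmono hhSI hts hhSts.le
      have hFhS_tn : F hS ≤ F tn := hFhS_ts.trans hFtstn.le
      have hFp1_hS : F p1 ≤ F hS := Fmono hp1I hhSI hhSp1
      have I1 := hWS hS hmemS lN hlNI
      have I2 := hWN lN hmemN hS hhSI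
      rw [Wr_low hFlN_ts hFlN_p1, Wr_mid hFhS_ts hFp1_hS] at I1
      rw [Wr_low hFlN_tn hFlN_p1, Wr_mid hFhS_tn hFp1_hS] at I2
      have hfin : 0 < μ * (F tn - F ts) * (hS - lN) := by
        apply mul_pos (mul_pos hμ0 (by linarith))
        linarith
      nlinarith [I1, I2, hfin]

end RepeatedSales
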